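/- Let A = [[2,1],[1,1]] and B = [[3,5],[1,2]] in GL(2,ℤ), and let C^s = {(x,y)∈ℝ² : x<0<y or y<0<x} and C^u = {(x,y)∈ℝ² : 0<y<x or x<y<0}. Then: (i) A(C^u) ⊆ C^u and B(C^u) ⊆ C^u; (ii) A⁻¹(C^s) ⊆ C^s and B⁻¹(C^s) ⊆ C^s; (iii) there exists λ>1 such that ‖Av‖ ≥ λ‖v‖ and ‖Bv‖ ≥ λ‖v‖ for every v in the closure of C^u, and ‖A⁻¹v‖ ≥ λ‖v‖ and ‖B⁻¹v‖ ≥ λ‖v‖ for every v in the closure of C^s; (iv) the eigenline of A for its eigenvalue of absolute value greater than 1 is distinct from the corresponding eigenline of B, and the eigenline of A for its eigenvalue of absolute value less than 1 is distinct from the corresponding eigenline of B. -/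

import Mathlib

open Matrix

/-- The matrix `A = [[2,1],[1,1]]`. -/
noncomputable def matA : Matrix (Fin 2) (Fin 2) ℝ := !![2, 1; 1, 1]

/-- The matrix `B = [[3,5],[1,2]]`. -/
noncomputable def matB : Matrix (Fin 2) (Fin 2) ℝ := !![3, 5; 1, 2]

/-- The stable cone `C^s = {(x,y) : x<0<y or y<0<x}`. -/
def coneS : Set (EuclideanSpace ℝ (Fin 2)) :=
  {v | (v 0 < 0 ∧ 0 < v 1) ∨ (v 1 < 0 ∧ 0 < v 0)}

/-- The unstable cone `C^u = {(x,y) : 0<y<x or x<y<0}`. -/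
def coneU : Set (EuclideanSpace ℝ (Fin 2)) :=
  {v | (0 < v 1 ∧ v 1 < v 0) ∨ (v 0 < v 1 ∧ v 1 < 0)}

lemma contApp (i : Fin 2) : Continuous (fun v : EuclideanSpace ℝ (Fin 2) => v i) :=
  (continuous_apply i).comp (PiLp.continuous_ofLp 2 _)

lemma toEL_apply (M : Matrix (Fin 2) (Fin 2) ℝ) (v : EuclideanSpace ℝ (Fin 2)) (i : Fin 2) :
    Matrix.toEuclideanLin M v i = M i 0 * v 0 + M i 1 * v 1 := by
  simp [Matrix.toEuclideanLin, Matrix.toLin'_apply, Matrix.mulVec, dotProduct, Fin.sum_univ_two]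

lemma normsq (v : EuclideanSpace ℝ (Fin 2)) : ‖v‖ ^ 2 = v 0 ^ 2 + v 1 ^ 2 := by
  rw [EuclideanSpace.norm_eq, Real.sq_sqrt (by positivity)]
  simp [Fin.sum_univ_two, sq_abs]

lemma invA : matA⁻¹ = !![1, -1; -1, 2] := by
  rw [Matrix.inv_def, Matrix.adjugate_fin_two, matA]
  norm_num [Matrix.det_fin_two_of]

lemma invB : matB⁻¹ = !![2, -5; -1, 3] := by
  rw [Matrix.inv_def, Matrix.adjugate_fin_two, matB]
  norm_num [Matrix.det_fin_two_of]

lemma matA_app (v : EuclideanSpace ℝ (Fin 2)) :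
    Matrix.toEuclideanLin matA v 0 = 2 * v 0 + v 1 ∧
    Matrix.toEuclideanLin matA v 1 = v 0 + v 1 := by
  rw [toEL_apply, toEL_apply]; norm_num [matA]

lemma matB_app (v : EuclideanSpace ℝ (Fin 2)) :
    Matrix.toEuclideanLin matB v 0 = 3 * v 0 + 5 * v 1 ∧
    Matrix.toEuclideanLin matB v 1 = v 0 + 2 * v 1 := by
  rw [toEL_apply, toEL_apply]; norm_num [matB]

lemma matAinv_app (v : EuclideanSpace ℝ (Fin 2)) :
    Matrix.toEuclideanLin matA⁻¹ v 0 = v 0 - v 1 ∧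
    Matrix.toEuclideanLin matA⁻¹ v 1 = -v 0 + 2 * v 1 := by
  rw [toEL_apply, toEL_apply, invA]; norm_num; ring

lemma matBinv_app (v : EuclideanSpace ℝ (Fin 2)) :
    Matrix.toEuclideanLin matB⁻¹ v 0 = 2 * v 0 - 5 * v 1 ∧
    Matrix.toEuclideanLin matB⁻¹ v 1 = -v 0 + 3 * v 1 := by
  rw [toEL_apply, toEL_apply, invB]; norm_num; ring

lemma sqrt2_norm_le (v w : EuclideanSpace ℝ (Fin 2))
    (h : 2 * (v 0 ^ 2 + v 1 ^ 2) ≤ w 0 ^ 2 + w 1 ^ 2) :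
    Real.sqrt 2 * ‖v‖ ≤ ‖w‖ := by
  have h1 : (Real.sqrt 2 * ‖v‖) ^ 2 ≤ ‖w‖ ^ 2 := by
    rw [mul_pow, Real.sq_sqrt (by norm_num : (0:ℝ) ≤ 2), normsq, normsq]
    linarith
  have h2 : 0 ≤ Real.sqrt 2 * ‖v‖ := by positivity
  nlinarith [norm_nonneg w]

/-- For `A = [[2,1],[1,1]]` and `B = [[3,5],[1,2]]` acting on the Euclidean
plane: (i) both preserve the unstable cone `C^u`; (ii) their inverses preserve the stable cone
`C^s`; (iii) there is `λ>1` such that `A` and `B` expand every vector in the closure of `C^u`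
by a factor at least `λ`, and `A⁻¹`, `B⁻¹` expand every vector in the closure of `C^s` by at
least `λ`; (iv) the unstable eigenlines of `A` and `B` are distinct, and their stable
eigenlines are distinct. -/
theorem linear_example_cone_conditions :
    (∀ v ∈ coneU, Matrix.toEuclideanLin matA v ∈ coneU ∧
      Matrix.toEuclideanLin matB v ∈ coneU) ∧
    (∀ v ∈ coneS, Matrix.toEuclideanLin matA⁻¹ v ∈ coneS ∧
      Matrix.toEuclideanLin matB⁻¹ v ∈ coneS) ∧
    (∃ lam : ℝ, 1 < lam ∧
      (∀ v ∈ closure coneU, lam * ‖v‖ ≤ ‖Matrix.toEuclideanLin matA v‖ ∧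
        lam * ‖v‖ ≤ ‖Matrix.toEuclideanLin matB v‖) ∧
      (∀ v ∈ closure coneS, lam * ‖v‖ ≤ ‖Matrix.toEuclideanLin matA⁻¹ v‖ ∧
        lam * ‖v‖ ≤ ‖Matrix.toEuclideanLin matB⁻¹ v‖)) ∧
    (∀ (aA aB : ℝ) (vA vB : EuclideanSpace ℝ (Fin 2)), vA ≠ 0 → vB ≠ 0 →
      Matrix.toEuclideanLin matA vA = aA • vA → Matrix.toEuclideanLin matB vB = aB • vB →
      ((1 < |aA| ∧ 1 < |aB|) ∨ (|aA| < 1 ∧ |aB| < 1)) →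
      Submodule.span ℝ {vA} ≠ Submodule.span ℝ {vB}) := by
  refine ⟨?_, ?_, ?_, ?_⟩
  · -- (i)
    intro v hv
    obtain ⟨hA0, hA1⟩ := matA_app v
    obtain ⟨hB0, hB1⟩ := matB_app v
    simp only [coneU, Set.mem_setOf_eq] at hv ⊢
    rw [hA0, hA1, hB0, hB1]
    rcases hv with ⟨h1, h2⟩ | ⟨h1, h2⟩
    · exact ⟨Or.inl ⟨by linarith, by linarith⟩, Or.inl ⟨by linarith, by linarith⟩⟩
    · exact ⟨Or.inr ⟨by linarith, by linarith⟩, Or.inr ⟨by linarith, by linarith⟩⟩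
  · -- (ii)
    intro v hv
    obtain ⟨hA0, hA1⟩ := matAinv_app v
    obtain ⟨hB0, hB1⟩ := matBinv_app v
    simp only [coneS, Set.mem_setOf_eq] at hv ⊢
    rw [hA0, hA1, hB0, hB1]
    rcases hv with ⟨h1, h2⟩ | ⟨h1, h2⟩
    · exact ⟨Or.inl ⟨by linarith, by linarith⟩, Or.inl ⟨by linarith, by linarith⟩⟩
    · exact ⟨Or.inr ⟨by linarith, by linarith⟩, Or.inr ⟨by linarith, by linarith⟩⟩
  · -- (iii)
    refine ⟨Real.sqrt 2, ?_, ?_, ?_⟩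
    · rw [show (1:ℝ) = Real.sqrt 1 by simp]
      exact Real.sqrt_lt_sqrt (by norm_num) (by norm_num)
    · intro v hv
      have hK : v ∈ {v : EuclideanSpace ℝ (Fin 2) | 0 ≤ v 1 * (v 0 - v 1)} := by
        refine closure_minimal ?_ ?_ hv
        · intro w hw
          simp only [coneU, Set.mem_setOf_eq] at hw
          rcases hw with ⟨h1, h2⟩ | ⟨h1, h2⟩ <;> · simp only [Set.mem_setOf_eq]; nlinarith
        · exact isClosed_le continuous_const
            ((contApp 1).mul ((contApp 0).sub (contApp 1)))
      simp only [Set.mem_setOf_eq] at hK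
      obtain ⟨hA0, hA1⟩ := matA_app v
      obtain ⟨hB0, hB1⟩ := matB_app v
      constructor
      · refine sqrt2_norm_le v _ ?_
        rw [hA0, hA1]
        nlinarith [sq_nonneg (v 0), sq_nonneg (v 1)]
      · refine sqrt2_norm_le v _ ?_
        rw [hB0, hB1]
        nlinarith [sq_nonneg (v 0), sq_nonneg (v 1)]
    · intro v hv
      have hK : v ∈ {v : EuclideanSpace ℝ (Fin 2) | v 0 * v 1 ≤ 0} := by
        refine closure_minimal ?_ ?_ hv
        · intro w hw
          simp only [coneS, Set.mem_setOf_eq] at hw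
          rcases hw with ⟨h1, h2⟩ | ⟨h1, h2⟩ <;> · simp only [Set.mem_setOf_eq]; nlinarith
        · exact isClosed_le
            ((contApp 0).mul (contApp 1))
            continuous_const
      simp only [Set.mem_setOf_eq] at hK
      obtain ⟨hA0, hA1⟩ := matAinv_app v
      obtain ⟨hB0, hB1⟩ := matBinv_app v
      constructor
      · refine sqrt2_norm_le v _ ?_
        rw [hA0, hA1]
        nlinarith [sq_nonneg (v 0), sq_nonneg (v 1)]
      · refine sqrt2_norm_le v _ ?_
        rw [hB0, hB1]
        nlinarith [sq_nonneg (v 0), sq_nonneg (v 1)]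
  · -- (iv)
    intro aA aB vA vB hvA hvB heA heB _ hspan
    have hmem : vB ∈ Submodule.span ℝ ({vA} : Set (EuclideanSpace ℝ (Fin 2))) := by
      rw [hspan]; exact Submodule.mem_span_singleton_self vB
    rw [Submodule.mem_span_singleton] at hmem
    obtain ⟨c, hc⟩ := hmem
    have hc0 : c ≠ 0 := by
      rintro rfl
      rw [zero_smul] at hc
      exact hvB hc.symm
    have heB' : Matrix.toEuclideanLin matB vA = aB • vA := by
      have h1 : c • Matrix.toEuclideanLin matB vA = c • (aB • vA) :=
        calc c • Matrix.toEuclideanLin matB vA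
            = Matrix.toEuclideanLin matB (c • vA) := (_root_.map_smul _ _ _).symm
          _ = aB • vB := by rw [hc]; exact heB
          _ = c • (aB • vA) := by rw [← hc, smul_comm]
      exact smul_right_injective _ hc0 h1
    -- component equations
    have eA0 : 2 * vA 0 + vA 1 = aA * vA 0 := by
      have h := congrArg (fun w : EuclideanSpace ℝ (Fin 2) => w 0) heA
      simp only [PiLp.smul_apply, smul_eq_mul] at h
      rw [(matA_app vA).1] at h; exact h
    have eA1 : vA 0 + vA 1 = aA * vA 1 := by
      have h := congrArg (fun w : EuclideanSpace ℝ (Fin 2) => w 1) heA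
      simp only [PiLp.smul_apply, smul_eq_mul] at h
      rw [(matA_app vA).2] at h; exact h
    have eB0 : 3 * vA 0 + 5 * vA 1 = aB * vA 0 := by
      have h := congrArg (fun w : EuclideanSpace ℝ (Fin 2) => w 0) heB'
      simp only [PiLp.smul_apply, smul_eq_mul] at h
      rw [(matB_app vA).1] at h; exact h
    have eB1 : vA 0 + 2 * vA 1 = aB * vA 1 := by
      have h := congrArg (fun w : EuclideanSpace ℝ (Fin 2) => w 1) heB'
      simp only [PiLp.smul_apply, smul_eq_mul] at h
      rw [(matB_app vA).2] at h; exact h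
    by_cases hy : vA 1 = 0
    · have hx : vA 0 = 0 := by rw [hy] at eA1; linarith [eA1]
      apply hvA
      ext i
      fin_cases i
      · simpa using hx
      · simpa using hy
    · have h5 : (aB - aA - 1) * vA 1 = 0 := by linear_combination eA1 - eB1
      have hb : aB = aA + 1 := by
        rcases mul_eq_zero.mp h5 with h | h
        · linarith
        · exact absurd h hy
      have h4 : (4 : ℝ) * vA 1 = 0 := by linear_combination eB0 - eA0 + vA 0 * hb
      exact hy (by linarith)
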